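/- Let d ≥ 1, γ > 0, and let D_r and D_n be Borel probability measures on ℝ^d with finite first moments E_{D_r}[‖x‖₂] < ∞ and E_{D_n}[‖x‖₂] < ∞. Then for any two star bodies K, L ∈ S^d(γ), the functional F satisfies the Lipschitz estimate |F(K; D_r, D_n) − F(L; D_r, D_n)| ≤ ((E_{D_r}[‖x‖₂] + E_{D_n}[‖x‖₂]) / γ²) · δ(K, L). -/

import Mathlib

open MeasureTheory Metric Set Filter Pointwise

noncomputable section

abbrev Euc (d : ℕ) : Type := EuclideanSpace ℝ (Fin d)

/-- Radial function of a set: `ρ_K(x) = sup {t > 0 : t • x ∈ K}`. -/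
def radialFn {d : ℕ} (K : Set (Euc d)) (x : Euc d) : ℝ :=
  sSup {t : ℝ | 0 < t ∧ t • x ∈ K}

/-- A star body: compact, `0` in the interior, star-shaped about `0`, with radial function
positive and continuous on the unit sphere. -/
def IsStarBody {d : ℕ} (K : Set (Euc d)) : Prop :=
  IsCompact K ∧ (0 : Euc d) ∈ interior K ∧
    (∀ x ∈ K, segment ℝ 0 x ⊆ K) ∧
    (∀ u ∈ sphere (0 : Euc d) 1, 0 < radialFn K u) ∧
    ContinuousOn (radialFn K) (sphere (0 : Euc d) 1)

/-- The kernel of a star body. -/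
def starKernel {d : ℕ} (K : Set (Euc d)) : Set (Euc d) :=
  {x | x ∈ K ∧ ∀ y ∈ K, segment ℝ x y ⊆ K}

/-- Radial metric between star bodies. -/
def radialDist {d : ℕ} (K L : Set (Euc d)) : ℝ :=
  ⨆ u : sphere (0 : Euc d) 1, |radialFn K (u : Euc d) - radialFn L (u : Euc d)|

/-- The adversarial objective `F(K; μ, ν) = E_μ[‖x‖_K] - E_ν[‖x‖_K]`. -/
def Fobj {d : ℕ} (K : Set (Euc d)) (μ ν : Measure (Euc d)) : ℝ :=
  (∫ x, gauge K x ∂μ) - (∫ x, gauge K x ∂ν)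


section Aux

variable {d : ℕ} {γ R : ℝ} {K : Set (Euc d)}

lemma radial_basic (hK : IsStarBody K) (hγ : 0 < γ) (hKγ : closedBall (0:Euc d) γ ⊆ K)
    (hR : K ⊆ closedBall (0:Euc d) R)
    {u : Euc d} (hu : u ∈ sphere (0:Euc d) 1) :
    γ ≤ radialFn K u ∧ radialFn K u ≤ R ∧ ∀ t : ℝ, 0 < t → t ≤ radialFn K u → t • u ∈ K := by
  have hun : ‖u‖ = 1 := mem_sphere_zero_iff_norm.1 hu
  set S : Set ℝ := {t : ℝ | 0 < t ∧ t • u ∈ K} with hS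
  have hγS : γ ∈ S := by
    refine ⟨hγ, hKγ ?_⟩
    rw [mem_closedBall_zero_iff, norm_smul, hun, Real.norm_of_nonneg hγ.le, mul_one]
  have hbdd : BddAbove S := by
    refine ⟨R, fun t ht => ?_⟩
    have := mem_closedBall_zero_iff.1 (hR ht.2)
    rwa [norm_smul, hun, mul_one, Real.norm_of_nonneg ht.1.le] at this
  have hγρ : γ ≤ radialFn K u := le_csSup hbdd hγS
  have hmemc : (radialFn K u) • u ∈ K := by
    have h1 : radialFn K u ∈ closure S := csSup_mem_closure ⟨γ, hγS⟩ hbdd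
    have h2 : S ⊆ (fun t : ℝ => t • u) ⁻¹' K := fun t ht => ht.2
    have h3 : IsClosed ((fun t : ℝ => t • u) ⁻¹' K) :=
      hK.1.isClosed.preimage (continuous_id.smul continuous_const)
    exact (closure_minimal h2 h3) h1
  refine ⟨hγρ, ?_, ?_⟩
  · have := mem_closedBall_zero_iff.1 (hR hmemc)
    rwa [norm_smul, hun, mul_one, Real.norm_of_nonneg (hγ.le.trans hγρ)] at this
  · intro t ht hle
    have hρpos : 0 < radialFn K u := lt_of_lt_of_le hγ hγρ
    have : t • u = (1 - t / radialFn K u) • (0:Euc d) + (t / radialFn K u) • ((radialFn K u) • u) := by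
      rw [smul_zero, zero_add, smul_smul, div_mul_cancel₀ _ hρpos.ne']
    refine hK.2.2.1 _ hmemc ?_
    rw [segment_eq_image]
    exact ⟨t / radialFn K u, ⟨div_nonneg ht.le hρpos.le, div_le_one_of_le₀ hle hρpos.le⟩,
      by simp only []; rw [← this]⟩

lemma gauge_eq_inv_radial (hK : IsStarBody K) (hγ : 0 < γ) (hKγ : closedBall (0:Euc d) γ ⊆ K)
    {u : Euc d} (hu : u ∈ sphere (0:Euc d) 1) :
    gauge K u = (radialFn K u)⁻¹ := by
  obtain ⟨R, hR⟩ := hK.1.isBounded.subset_closedBall 0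
  obtain ⟨h1, h2, h3⟩ := radial_basic hK hγ hKγ hR hu
  set ρ := radialFn K u
  have hρpos : 0 < ρ := lt_of_lt_of_le hγ h1
  have hset : {r : ℝ | 0 < r ∧ u ∈ r • K} = Ici ρ⁻¹ := by
    ext r
    simp only [mem_setOf_eq, mem_Ici]
    constructor
    · rintro ⟨hr, hmem⟩
      have : r⁻¹ • u ∈ K := (mem_smul_set_iff_inv_smul_mem₀ hr.ne' _ _).1 hmem
      have hrle : r⁻¹ ≤ ρ := le_csSup
        (⟨R, fun t ht => by
          have := mem_closedBall_zero_iff.1 (hR ht.2)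
          rwa [norm_smul, mem_sphere_zero_iff_norm.1 hu, mul_one,
            Real.norm_of_nonneg ht.1.le] at this⟩)
        ⟨inv_pos.2 hr, this⟩
      calc ρ⁻¹ ≤ (r⁻¹)⁻¹ := by
            apply inv_anti₀ (inv_pos.2 hr) hrle
        _ = r := inv_inv r
    · intro hge
      have hr : 0 < r := lt_of_lt_of_le (inv_pos.2 hρpos) hge
      have hrinv : r⁻¹ ≤ ρ := by
        calc r⁻¹ ≤ (ρ⁻¹)⁻¹ := inv_anti₀ (inv_pos.2 hρpos) hge
          _ = ρ := inv_inv ρ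
      exact ⟨hr, (mem_smul_set_iff_inv_smul_mem₀ hr.ne' _ _).2 (h3 _ (inv_pos.2 hr) hrinv)⟩
  rw [gauge, hset, csInf_Ici]

lemma gauge_le_norm_div (hγ : 0 < γ) (hKγ : closedBall (0:Euc d) γ ⊆ K) (x : Euc d) :
    gauge K x ≤ ‖x‖ / γ := by
  rcases eq_or_ne x 0 with rfl | hx
  · simp [gauge_zero]
  · have hxn : (0:ℝ) < ‖x‖ := norm_pos_iff.2 hx
    refine gauge_le_of_mem (by positivity) ?_
    rw [mem_smul_set_iff_inv_smul_mem₀ (by positivity)]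
    apply hKγ
    rw [mem_closedBall_zero_iff, norm_smul, Real.norm_of_nonneg (by positivity)]
    rw [inv_div]
    field_simp
    exact le_rfl

lemma gauge_formula (hK : IsStarBody K) (hγ : 0 < γ) (hKγ : closedBall (0:Euc d) γ ⊆ K)
    {x : Euc d} (hx : x ≠ 0) :
    gauge K x = ‖x‖ * (radialFn K (‖x‖⁻¹ • x))⁻¹ := by
  have hxn : (0:ℝ) < ‖x‖ := norm_pos_iff.2 hx
  have hu : (‖x‖⁻¹ • x) ∈ sphere (0:Euc d) 1 := by
    rw [mem_sphere_zero_iff_norm, norm_smul, Real.norm_of_nonneg (by positivity),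
      inv_mul_cancel₀ hxn.ne']
  have h1 : gauge K x = ‖x‖ * gauge K (‖x‖⁻¹ • x) := by
    conv_lhs => rw [show x = ‖x‖ • (‖x‖⁻¹ • x) by rw [smul_smul, mul_inv_cancel₀ hxn.ne', one_smul]]
    rw [gauge_smul_of_nonneg hxn.le, smul_eq_mul]
  rw [h1, gauge_eq_inv_radial hK hγ hKγ hu]

lemma gauge_continuous (hK : IsStarBody K) (hγ : 0 < γ) (hKγ : closedBall (0:Euc d) γ ⊆ K) :
    Continuous (gauge K) := by
  rw [continuous_iff_continuousAt]
  intro x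
  rcases eq_or_ne x 0 with rfl | hx
  · have h0 : gauge K (0:Euc d) = 0 := gauge_zero
    rw [ContinuousAt, h0]
    have hsq : ∀ y : Euc d, ‖gauge K y‖ ≤ (1/γ) * ‖y‖ := by
      intro y
      rw [Real.norm_of_nonneg (gauge_nonneg _)]
      calc gauge K y ≤ ‖y‖ / γ := gauge_le_norm_div hγ hKγ y
        _ = (1/γ) * ‖y‖ := by ring
    refine squeeze_zero_norm (t₀ := nhds 0) hsq ?_
    · have : Tendsto (fun y : Euc d => (1/γ) * ‖y‖) (nhds 0) (nhds ((1/γ) * ‖(0:Euc d)‖)) :=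
        (continuous_const.mul continuous_norm).tendsto 0
      simpa using this
  · have hopen : IsOpen {y : Euc d | y ≠ 0} := isOpen_compl_singleton
    have hmem : x ∈ {y : Euc d | y ≠ 0} := hx
    have hcont : ContinuousOn (fun y : Euc d => ‖y‖ * (radialFn K (‖y‖⁻¹ • y))⁻¹)
        {y : Euc d | y ≠ 0} := by
      have hnorm : ContinuousOn (fun y : Euc d => ‖y‖) {y : Euc d | y ≠ 0} :=
        continuous_norm.continuousOn
      have hproj : ContinuousOn (fun y : Euc d => ‖y‖⁻¹ • y) {y : Euc d | y ≠ 0} := by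
        exact ContinuousOn.smul (hnorm.inv₀ (fun y hy => norm_ne_zero_iff.2 hy))
          continuous_id.continuousOn
      have hmaps : MapsTo (fun y : Euc d => ‖y‖⁻¹ • y) {y : Euc d | y ≠ 0}
          (sphere (0:Euc d) 1) := by
        intro y hy
        have hyn : (0:ℝ) < ‖y‖ := norm_pos_iff.2 hy
        rw [mem_sphere_zero_iff_norm, norm_smul, Real.norm_of_nonneg (by positivity),
          inv_mul_cancel₀ hyn.ne']
      have hrad : ContinuousOn (fun y : Euc d => radialFn K (‖y‖⁻¹ • y)) {y : Euc d | y ≠ 0} :=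
        hK.2.2.2.2.comp hproj hmaps
      exact hnorm.mul (hrad.inv₀ (fun y hy => (hK.2.2.2.1 _ (hmaps hy)).ne'))
    have hca : ContinuousAt (fun y : Euc d => ‖y‖ * (radialFn K (‖y‖⁻¹ • y))⁻¹) x :=
      hcont.continuousAt (hopen.mem_nhds hmem)
    refine hca.congr ?_
    filter_upwards [hopen.mem_nhds hmem] with y hy
    exact (gauge_formula hK hγ hKγ hy).symm

variable {L : Set (Euc d)}

lemma abs_radial_le (hd : 1 ≤ d) (hK : IsStarBody K) (hL : IsStarBody L) (hγ : 0 < γ)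
    (hKγ : closedBall (0:Euc d) γ ⊆ K) (hLγ : closedBall (0:Euc d) γ ⊆ L)
    {u : Euc d} (hu : u ∈ sphere (0:Euc d) 1) :
    |radialFn K u - radialFn L u| ≤ radialDist K L := by
  obtain ⟨RK, hRK⟩ := hK.1.isBounded.subset_closedBall 0
  obtain ⟨RL, hRL⟩ := hL.1.isBounded.subset_closedBall 0
  have hbdd : BddAbove (Set.range fun v : sphere (0:Euc d) 1 =>
      |radialFn K (v : Euc d) - radialFn L (v : Euc d)|) := by
    refine ⟨RK + RL, ?_⟩
    rintro r ⟨⟨v, hv⟩, rfl⟩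
    obtain ⟨hK1, hK2, -⟩ := radial_basic hK hγ hKγ hRK hv
    obtain ⟨hL1, hL2, -⟩ := radial_basic hL hγ hLγ hRL hv
    rw [abs_le]
    constructor <;> simp only [neg_le, le_sub_iff_add_le, sub_le_iff_le_add] <;> nlinarith
  exact le_ciSup hbdd (⟨u, hu⟩ : sphere (0:Euc d) 1)

lemma gauge_diff_bound (hd : 1 ≤ d) (hK : IsStarBody K) (hL : IsStarBody L) (hγ : 0 < γ)
    (hKγ : closedBall (0:Euc d) γ ⊆ K) (hLγ : closedBall (0:Euc d) γ ⊆ L) (x : Euc d) :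
    |gauge K x - gauge L x| ≤ ‖x‖ * (radialDist K L / γ^2) := by
  rcases eq_or_ne x 0 with rfl | hx
  · simp [gauge_zero]
  · have hxn : (0:ℝ) < ‖x‖ := norm_pos_iff.2 hx
    set u := ‖x‖⁻¹ • x with hu_def
    have hu : u ∈ sphere (0:Euc d) 1 := by
      rw [mem_sphere_zero_iff_norm, hu_def, norm_smul, Real.norm_of_nonneg (by positivity),
        inv_mul_cancel₀ hxn.ne']
    obtain ⟨RK, hRK⟩ := hK.1.isBounded.subset_closedBall 0
    obtain ⟨RL, hRL⟩ := hL.1.isBounded.subset_closedBall 0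
    obtain ⟨hK1, -, -⟩ := radial_basic hK hγ hKγ hRK hu
    obtain ⟨hL1, -, -⟩ := radial_basic hL hγ hLγ hRL hu
    set a := radialFn K u
    set b := radialFn L u
    have ha : 0 < a := lt_of_lt_of_le hγ hK1
    have hb : 0 < b := lt_of_lt_of_le hγ hL1
    have habs : |a - b| ≤ radialDist K L := abs_radial_le hd hK hL hγ hKγ hLγ hu
    have hδ : 0 ≤ radialDist K L := le_trans (abs_nonneg _) habs
    rw [gauge_formula hK hγ hKγ hx, gauge_formula hL hγ hLγ hx, ← hu_def]
    rw [← mul_sub, abs_mul, abs_of_nonneg hxn.le]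
    gcongr -- hope: reduces to |a⁻¹ - b⁻¹| ≤ δ/γ²
    have heq : a⁻¹ - b⁻¹ = (b - a) / (a * b) := by field_simp
    rw [heq, abs_div, abs_of_pos (mul_pos ha hb), abs_sub_comm]
    exact div_le_div₀ hδ habs (by positivity) (by nlinarith)

end Aux

/-- Lipschitz estimate for the adversarial objective with respect to the
radial metric, over well-conditioned star bodies in `S^d(γ)`. -/
theorem lipschitz_of_Fobj {d : ℕ} (hd : 1 ≤ d) (γ : ℝ) (hγ : 0 < γ)
    (μ ν : Measure (Euc d)) [IsProbabilityMeasure μ] [IsProbabilityMeasure ν]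
    (hμ : Integrable (fun x => ‖x‖) μ) (hν : Integrable (fun x => ‖x‖) ν)
    (K L : Set (Euc d)) (hK : IsStarBody K) (hL : IsStarBody L)
    (hKγ : closedBall (0 : Euc d) γ ⊆ starKernel K)
    (hLγ : closedBall (0 : Euc d) γ ⊆ starKernel L) :
    |Fobj K μ ν - Fobj L μ ν| ≤
      (((∫ x, ‖x‖ ∂μ) + (∫ x, ‖x‖ ∂ν)) / γ ^ 2) * radialDist K L := by
  have hKγ' : closedBall (0 : Euc d) γ ⊆ K := fun x hx => (hKγ hx).1
  have hLγ' : closedBall (0 : Euc d) γ ⊆ L := fun x hx => (hLγ hx).1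
  set δ := radialDist K L with hδdef
  have hint : ∀ (ρ : Measure (Euc d)) [IsProbabilityMeasure ρ],
      Integrable (fun x => ‖x‖) ρ → ∀ (M : Set (Euc d)), IsStarBody M →
      closedBall (0 : Euc d) γ ⊆ M → Integrable (gauge M) ρ := by
    intro ρ _ hρ M hM hMγ
    refine (hρ.div_const γ).mono' (gauge_continuous hM hγ hMγ).aestronglyMeasurable ?_
    refine ae_of_all _ fun x => ?_
    rw [Real.norm_of_nonneg (gauge_nonneg _)]
    exact gauge_le_norm_div hγ hMγ x
  have hgKμ := hint μ hμ K hK hKγ'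
  have hgLμ := hint μ hμ L hL hLγ'
  have hgKν := hint ν hν K hK hKγ'
  have hgLν := hint ν hν L hL hLγ'
  have hkey : ∀ x : Euc d, |gauge K x - gauge L x| ≤ ‖x‖ * (δ / γ^2) :=
    gauge_diff_bound hd hK hL hγ hKγ' hLγ'
  have hb : ∀ (ρ : Measure (Euc d)) [IsProbabilityMeasure ρ],
      Integrable (fun x => ‖x‖) ρ → Integrable (gauge K) ρ → Integrable (gauge L) ρ →
      |∫ x, (gauge K x - gauge L x) ∂ρ| ≤ (∫ x, ‖x‖ ∂ρ) * (δ / γ^2) := by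
    intro ρ _ hρ h1 h2
    calc |∫ x, (gauge K x - gauge L x) ∂ρ| ≤ ∫ x, |gauge K x - gauge L x| ∂ρ :=
          by simpa [Real.norm_eq_abs] using
            norm_integral_le_integral_norm (μ := ρ) (fun x => gauge K x - gauge L x)
      _ ≤ ∫ x, ‖x‖ * (δ / γ^2) ∂ρ := by
          refine integral_mono (h1.sub h2).abs (hρ.mul_const _) fun x => hkey x
      _ = (∫ x, ‖x‖ ∂ρ) * (δ / γ^2) := integral_mul_const _ _
  have hFeq : Fobj K μ ν - Fobj L μ ν =
      (∫ x, (gauge K x - gauge L x) ∂μ) - (∫ x, (gauge K x - gauge L x) ∂ν) := by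
    rw [Fobj, Fobj, integral_sub hgKμ hgLμ, integral_sub hgKν hgLν]
    ring
  rw [hFeq]
  calc |(∫ x, (gauge K x - gauge L x) ∂μ) - (∫ x, (gauge K x - gauge L x) ∂ν)|
      ≤ |∫ x, (gauge K x - gauge L x) ∂μ| + |∫ x, (gauge K x - gauge L x) ∂ν| :=
        abs_sub _ _
    _ ≤ (∫ x, ‖x‖ ∂μ) * (δ / γ^2) + (∫ x, ‖x‖ ∂ν) * (δ / γ^2) :=
        add_le_add (hb μ hμ hgKμ hgLμ) (hb ν hν hgKν hgLν)
    _ = (((∫ x, ‖x‖ ∂μ) + (∫ x, ‖x‖ ∂ν)) / γ ^ 2) * δ := by ring
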